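/- Partial-sum bounds along the Horner recurrence for nonnegative data: Let u be a real number with 0 ≤ u < 1, let n be a positive integer, let x ≥ 0 be a real number, and let a_0, …, a_n, b_0, …, b_n be nonnegative real numbers. Suppose r_0, …, r_n are real numbers such that r_n = (a_n + b_n)/(1+μ_n) and, for every i = n−1, …, 0, r_i = ( r_{i+1}·x/(1+ε_i) + (a_i + b_i)/(1+μ_i) ) / (1+δ_i), where all the perturbations ε_i, δ_i, μ_i have absolute value at most u. Then for every i = 0, …, n, Σ_{j=0}^{i} (a_{n−i+j} + b_{n−i+j}) x^j ≤ (1+u)^{2i+1} · r_{n−i}. -/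
import Mathlib


/-- Partial-sum bounds along the Horner recurrence for nonnegative data. -/
theorem horner_sum_partial_bounds
    (u : ℝ) (hu0 : 0 ≤ u) (hu1 : u < 1) (n : ℕ) (hn : 1 ≤ n)
    (x : ℝ) (hx : 0 ≤ x) (a b r ε δ μ : ℕ → ℝ)
    (ha : ∀ i ≤ n, 0 ≤ a i) (hb : ∀ i ≤ n, 0 ≤ b i)
    (hμu : ∀ i ≤ n, |μ i| ≤ u)
    (hεu : ∀ i < n, |ε i| ≤ u) (hδu : ∀ i < n, |δ i| ≤ u)
    (hrn : r n = (a n + b n) / (1 + μ n))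
    (hrec : ∀ i < n,
      r i = (r (i + 1) * x / (1 + ε i) + (a i + b i) / (1 + μ i)) / (1 + δ i)) :
    ∀ i ≤ n,
      ∑ j ∈ Finset.range (i + 1), (a (n - i + j) + b (n - i + j)) * x ^ j ≤
        (1 + u) ^ (2 * i + 1) * r (n - i) := by
  have key : ∀ t : ℝ, |t| ≤ u → 0 < 1 + t ∧ 1 + t ≤ 1 + u := by
    intro t ht
    have h1 := abs_le.mp ht
    constructor <;> linarith
  have hcp : (0:ℝ) < 1 + u := by linarith
  intro i
  induction i with
  | zero =>
    intro _
    simp only [Nat.sub_zero, zero_add, Finset.sum_range_one, pow_zero, mul_one,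
      add_zero, Nat.mul_zero, pow_one]
    rw [hrn]
    obtain ⟨hμp, hμl⟩ := key (μ n) (hμu n le_rfl)
    have hab : 0 ≤ a n + b n := by
      have := ha n le_rfl; have := hb n le_rfl; linarith
    rw [← mul_div_assoc, le_div_iff₀ hμp]
    nlinarith [mul_le_mul_of_nonneg_left hμl hab]
  | succ i IH =>
    intro hin
    have hi : i ≤ n := le_of_lt (Nat.lt_of_succ_le hin)
    have hIH := IH hi
    set k := n - (i+1) with hk
    have hk1 : k + 1 = n - i := by omega
    have hkn : k < n := by omega
    rw [← hk1] at hIH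
    obtain ⟨hμp, hμl⟩ := key (μ k) (hμu k hkn.le)
    obtain ⟨hεp, hεl⟩ := key (ε k) (hεu k hkn)
    obtain ⟨hδp, hδl⟩ := key (δ k) (hδu k hkn)
    have hab : 0 ≤ a k + b k := by
      have := ha k hkn.le; have := hb k hkn.le; linarith
    set S := ∑ j ∈ Finset.range (i+1), (a (k+1 + j) + b (k+1 + j)) * x ^ j with hS
    have hSnn : 0 ≤ S := by
      apply Finset.sum_nonneg
      intro j hj
      have hj' : j ≤ i := Nat.lt_succ_iff.mp (Finset.mem_range.mp hj)
      have h1 : k + 1 + j ≤ n := by omega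
      have := ha _ h1; have := hb _ h1
      positivity
    have hrnn : 0 ≤ r (k+1) := by
      nlinarith [pow_pos hcp (2*i+1), hIH]
    have hsum : ∑ j ∈ Finset.range (i+1+1), (a (k + j) + b (k + j)) * x ^ j
        = (a k + b k) + x * S := by
      rw [Finset.sum_range_succ', Finset.mul_sum]
      simp only [pow_zero, mul_one]
      rw [add_comm]
      congr 1
      apply Finset.sum_congr rfl
      intro j _
      rw [show k + (j+1) = k+1+j from by omega]
      ring
    rw [hsum]
    -- lower bound on r k
    have hrx : 0 ≤ r (k+1) * x := mul_nonneg hrnn hx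
    have h1 : r (k+1) * x / (1 + u) ≤ r (k+1) * x / (1 + ε k) := by
      gcongr
    have h2 : (a k + b k) / (1 + u) ≤ (a k + b k) / (1 + μ k) := by
      gcongr
    have h3 : (r (k+1) * x + (a k + b k)) / (1 + u) / (1 + u) ≤ r k := by
      rw [hrec k hkn]
      have hnum : 0 ≤ r (k+1) * x / (1 + ε k) + (a k + b k) / (1 + μ k) := by
        positivity
      calc (r (k+1) * x + (a k + b k)) / (1 + u) / (1 + u)
          = (r (k+1) * x / (1+u) + (a k + b k) / (1+u)) / (1 + u) := by ring
        _ ≤ (r (k+1) * x / (1 + ε k) + (a k + b k) / (1 + μ k)) / (1 + u) := by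
            gcongr
        _ ≤ (r (k+1) * x / (1 + ε k) + (a k + b k) / (1 + μ k)) / (1 + δ k) := by
            gcongr
    have h4 : r (k+1) * x + (a k + b k) ≤ (1 + u) * (1 + u) * r k := by
      rw [div_div, div_le_iff₀ (by positivity)] at h3
      linarith [h3]
    have hpow1 : (1:ℝ) ≤ (1+u)^(2*i+1) := by
      calc (1:ℝ) = 1^(2*i+1) := (one_pow _).symm
        _ ≤ (1+u)^(2*i+1) := pow_le_pow_left₀ one_pos.le (by linarith) _
    have hpownn : (0:ℝ) ≤ (1+u)^(2*i+1) := by positivity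
    calc (a k + b k) + x * S
        ≤ (1+u)^(2*i+1) * (a k + b k) + x * ((1+u)^(2*i+1) * r (k+1)) := by
          have hxS := mul_le_mul_of_nonneg_left hIH hx
          nlinarith [mul_le_mul_of_nonneg_right hpow1 hab]
      _ = (1+u)^(2*i+1) * (r (k+1) * x + (a k + b k)) := by ring
      _ ≤ (1+u)^(2*i+1) * ((1 + u) * (1 + u) * r k) := by
          exact mul_le_mul_of_nonneg_left h4 hpownn
      _ = (1+u)^(2*(i+1)+1) * r k := by
          rw [show 2*(i+1)+1 = (2*i+1) + 2 from by omega, pow_add]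
          ring
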